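/- Let w, n, r, ρ, x be positive real numbers and let ξ, s, σ, a be reals with 0 < ξ < x. Set μ = x/r and μ_A = ξ/ρ and assume: (i) μ_A < μ; (ii) n(μ − μ_A) ≥ 1/(rρw); (iii) a(μ − μ_A) = (σ/ρ)μ − (s/r)μ_A; (iv) ξ² − 2wρσ ≥ 0; (v) x² − 2wrs ≥ 0. Then a ≤ (n/2)·(x/r)·(x² − 2wrs). -/

import Mathlib

theorem stmt12 (w n r ρ x ξ s σ a : ℝ)
    (hw : 0 < w) (hn : 0 < n) (hr : 0 < r) (hρ : 0 < ρ) (hx : 0 < x)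
    (hξ0 : 0 < ξ) (hξx : ξ < x)
    (μ μA : ℝ) (hμ : μ = x / r) (hμA : μA = ξ / ρ)
    (h1 : μA < μ)
    (h2 : n * (μ - μA) ≥ 1 / (r * ρ * w))
    (h3 : a * (μ - μA) = σ / ρ * μ - s / r * μA)
    (h4 : ξ ^ 2 - 2 * w * ρ * σ ≥ 0)
    (h5 : x ^ 2 - 2 * w * r * s ≥ 0) :
    a ≤ n / 2 * (x / r) * (x ^ 2 - 2 * w * r * s) := by
  subst hμ hμA
  have hrρ : (0:ℝ) < r * ρ := by positivity
  -- P = x*ρ - ξ*r > 0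
  have hP : 0 < x * ρ - ξ * r := by
    rw [div_lt_div_iff₀ hρ hr] at h1
    nlinarith [h1]
  have e : (x * ρ - ξ * r) = (x / r - ξ / ρ) * (r * ρ) := by
    field_simp
  -- h3 cleared of denominators: a * P = σ*x - s*ξ
  have hA : a * (x * ρ - ξ * r) = σ * x - s * ξ := by
    rw [e, ← mul_assoc, h3]
    field_simp
  -- h2 cleared: n * w * P ≥ 1
  have hB : n * w * (x * ρ - ξ * r) ≥ 1 := by
    have := mul_le_mul_of_nonneg_right h2 (le_of_lt (by positivity : (0:ℝ) < r * ρ * w))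
    have e2 : n * (x / r - ξ / ρ) * (r * ρ * w) = n * w * (x * ρ - ξ * r) := by
      field_simp
    rw [e2] at this
    calc (1:ℝ) = 1 / (r * ρ * w) * (r * ρ * w) := by field_simp
    _ ≤ n * w * (x * ρ - ξ * r) := this
  -- scaled version of hA
  have hC : 2 * r * w * ρ * (a * (x * ρ - ξ * r)) = 2 * r * w * ρ * (σ * x - s * ξ) := by
    rw [hA]
  -- reduce goal to polynomial form
  rw [show n / 2 * (x / r) * (x ^ 2 - 2 * w * r * s)
      = n * x * (x ^ 2 - 2 * w * r * s) / (2 * r) by ring,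
    le_div_iff₀ (by positivity : (0:ℝ) < 2 * r)]
  -- key polynomial inequality
  nlinarith [mul_nonneg (mul_nonneg h4 hr.le) hx.le,
    mul_nonneg (mul_nonneg (sub_pos.mpr hξx).le h5) hρ.le,
    mul_nonneg hP.le (mul_nonneg hξ0.le hx.le),
    mul_nonneg (sub_nonneg.mpr hB) (mul_nonneg (mul_nonneg hx.le h5) hρ.le),
    mul_pos (mul_pos hw hρ) hP, hC]
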